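/- Let s be a real random variable with mean zero, variance Var[s] ≥ v > 0, and sub-Gaussian tails P(s² ≥ a²) ≤ 2 exp(-a²/(2σ²)) for all a ≥ 0. Then for any σ₁², σ₂² with 0 < σ₁² ≤ σ₂², the probability P(s² > σ₁²) ≥ (v - σ₁² - 4σ²(1 + σ₂²/(2σ²)) exp(-σ₂²/(2σ²))) / σ₂². -/

import Mathlib

open MeasureTheory Real Set Filter

lemma exp_int_Ioi0 {b : ℝ} (hb : 0 < b) : ∫ x in Ioi (0:ℝ), exp (-b * x) = b⁻¹ := by
  have := integral_comp_mul_left_Ioi (fun y => exp (-y)) 0 hb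
  simp only [mul_zero, neg_mul] at this ⊢
  rw [this, integral_exp_neg_Ioi_zero, smul_eq_mul, mul_one]

theorem stmt_12 {Ω : Type*} [MeasurableSpace Ω] (μ : Measure Ω)
    [IsProbabilityMeasure μ] (s : Ω → ℝ) (hmeas : Measurable s)
    (hint : Integrable (fun ω => (s ω) ^ 2) μ)
    (hmean : ∫ ω, s ω ∂μ = 0)
    (v σ2 s1 s2 : ℝ) (hv : 0 < v) (hσ2 : 0 < σ2)
    (hvar : v ≤ ∫ ω, (s ω) ^ 2 ∂μ)
    (htail : ∀ a : ℝ, 0 ≤ a →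
      μ {ω | a ^ 2 ≤ (s ω) ^ 2} ≤ ENNReal.ofReal (2 * exp (-a ^ 2 / (2 * σ2))))
    (hs1 : 0 < s1) (hs12 : s1 ≤ s2) :
    ENNReal.ofReal
        ((v - s1 - 4 * σ2 * (1 + s2 / (2 * σ2)) * exp (-s2 / (2 * σ2))) / s2) ≤
      μ {ω | s1 < (s ω) ^ 2} := by
  set g : Ω → ℝ := fun ω => (s ω) ^ 2 with hg
  have hgmeas : Measurable g := hmeas.pow_const 2
  have hs2 : 0 < s2 := lt_of_lt_of_le hs1 hs12
  set e2 : ℝ := exp (-s2 / (2 * σ2)) with he2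
  have tail : ∀ t : ℝ, 0 ≤ t → μ {ω | t ≤ g ω} ≤ ENNReal.ofReal (2 * exp (-t / (2 * σ2))) := by
    intro t ht
    have := htail (Real.sqrt t) (Real.sqrt_nonneg t)
    rwa [Real.sq_sqrt ht] at this
  set A : Set Ω := {ω | s1 < g ω} with hA
  set B : Set Ω := {ω | s2 < g ω} with hB
  have hAm : MeasurableSet A := measurableSet_lt measurable_const hgmeas
  have hBm : MeasurableSet B := measurableSet_lt measurable_const hgmeas
  set h : Ω → ℝ := fun ω => max (g ω - s2) 0 with hh
  have h_int : Integrable h μ := (hint.sub (integrable_const s2)).pos_part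
  have h_nn : 0 ≤ᵐ[μ] h := Filter.Eventually.of_forall fun ω => le_max_right _ _
  have hmuB : (μ B).toReal ≤ 2 * e2 := by
    have h1 : μ B ≤ μ {ω | s2 ≤ g ω} :=
      measure_mono fun ω (hω : s2 < g ω) => hω.le
    exact ENNReal.toReal_le_of_le_ofReal (by positivity) (h1.trans (tail s2 hs2.le))
  have hb : (0:ℝ) < 1 / (2 * σ2) := by positivity
  have hInth : ∫ ω, h ω ∂μ ≤ 4 * σ2 * e2 := by
    rw [h_int.integral_eq_integral_meas_le h_nn]
    have rhs_int : IntegrableOn (fun t : ℝ => 2 * e2 * exp (-(1/(2*σ2)) * t)) (Ioi 0) := by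
      exact (exp_neg_integrableOn_Ioi 0 hb).const_mul _
    have key : ∫ t in Ioi (0:ℝ), (μ {ω | t ≤ h ω}).toReal
        ≤ ∫ t in Ioi (0:ℝ), 2 * e2 * exp (-(1/(2*σ2)) * t) := by
      refine integral_mono_of_nonneg
        (Filter.Eventually.of_forall fun t => ENNReal.toReal_nonneg) rhs_int ?_
      filter_upwards [ae_restrict_mem measurableSet_Ioi] with t ht
      have ht0 : (0:ℝ) < t := ht
      have hsub : {ω | t ≤ h ω} ⊆ {ω | t + s2 ≤ g ω} := by
        intro ω hω
        simp only [mem_setOf_eq, hh, le_max_iff] at hω ⊢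
        rcases hω with h' | h' <;> linarith
      have h3 : (μ {ω | t ≤ h ω}).toReal ≤ 2 * exp (-(t + s2) / (2 * σ2)) :=
        ENNReal.toReal_le_of_le_ofReal (by positivity)
          ((measure_mono hsub).trans (tail (t + s2) (by linarith)))
      refine h3.trans (le_of_eq ?_)
      rw [he2, mul_assoc, ← Real.exp_add]
      congr 2
      field_simp
      ring
    refine key.trans (le_of_eq ?_)
    rw [integral_const_mul, exp_int_Ioi0 hb]
    field_simp
    ring
  have pt1 : ∀ ω, g ω ≤ s1 + s2 * A.indicator (fun _ => (1:ℝ)) ω + B.indicator g ω := by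
    intro ω
    by_cases h1 : ω ∈ A
    · by_cases h2 : ω ∈ B
      · have : 0 ≤ g ω := sq_nonneg _
        simp only [Set.indicator_of_mem, h1, h2]
        nlinarith
      · have hg2 : g ω ≤ s2 := not_lt.1 h2
        simp only [Set.indicator_of_mem h1, Set.indicator_of_notMem h2]
        linarith
    · have hg1 : g ω ≤ s1 := not_lt.1 h1
      have h2 : ω ∉ B := fun hB' => h1 (lt_of_le_of_lt hs12 hB')
      simp only [Set.indicator_of_notMem h1, Set.indicator_of_notMem h2]
      linarith
  have pt2 : ∀ ω, B.indicator g ω ≤ h ω + s2 * B.indicator (fun _ => (1:ℝ)) ω := by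
    intro ω
    by_cases h2 : ω ∈ B
    · simp only [Set.indicator_of_mem h2, hh]
      have : g ω - s2 ≤ max (g ω - s2) 0 := le_max_left _ _
      linarith
    · simp only [Set.indicator_of_notMem h2, hh]
      positivity
  have intIndA : Integrable (fun ω => A.indicator (fun _ => (1:ℝ)) ω) μ :=
    (integrable_const (1:ℝ)).indicator hAm
  have intIndB : Integrable (fun ω => B.indicator (fun _ => (1:ℝ)) ω) μ :=
    (integrable_const (1:ℝ)).indicator hBm
  have intBg : Integrable (fun ω => B.indicator g ω) μ := hint.indicator hBm
  have hiA : ∫ ω, A.indicator (fun _ => (1:ℝ)) ω ∂μ = (μ A).toReal := by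
    rw [integral_indicator hAm]; simp; rfl
  have hiB : ∫ ω, B.indicator (fun _ => (1:ℝ)) ω ∂μ = (μ B).toReal := by
    rw [integral_indicator hBm]; simp; rfl
  have int2 : Integrable (fun ω => s2 * B.indicator (fun _ => (1:ℝ)) ω) μ :=
    intIndB.const_mul s2
  have intF : Integrable (fun ω => s1 + s2 * A.indicator (fun _ => (1:ℝ)) ω) μ := by
    exact (integrable_const s1).add (intIndA.const_mul s2)
  have e1 : ∫ ω, (s1 + s2 * A.indicator (fun _ => (1:ℝ)) ω + B.indicator g ω) ∂μ
      = s1 + s2 * (μ A).toReal + ∫ ω, B.indicator g ω ∂μ := by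
    rw [integral_add intF intBg, integral_add (integrable_const s1) (intIndA.const_mul s2),
      integral_const, integral_const_mul, hiA]
    simp
  have step1 : ∫ ω, g ω ∂μ ≤ s1 + s2 * (μ A).toReal + ∫ ω, B.indicator g ω ∂μ := by
    rw [← e1]
    exact integral_mono hint (intF.add intBg) pt1
  have step2 : ∫ ω, B.indicator g ω ∂μ ≤ 4 * σ2 * e2 + s2 * (2 * e2) := by
    have h4 : ∫ ω, B.indicator g ω ∂μ
        ≤ ∫ ω, (h ω + s2 * B.indicator (fun _ => (1:ℝ)) ω) ∂μ :=
      integral_mono intBg (h_int.add int2) pt2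
    rw [integral_add h_int int2, integral_const_mul, hiB] at h4
    nlinarith [mul_le_mul_of_nonneg_left hmuB hs2.le]
  have hvar' : v ≤ ∫ ω, g ω ∂μ := hvar
  have main : v ≤ s1 + s2 * (μ A).toReal + (4 * σ2 * e2 + 2 * s2 * e2) := by
    linarith
  have hE : 4 * σ2 * (1 + s2 / (2 * σ2)) * e2 = 4 * σ2 * e2 + 2 * s2 * e2 := by
    field_simp; ring
  have hdiv : (v - s1 - 4 * σ2 * (1 + s2 / (2 * σ2)) * e2) / s2 ≤ (μ A).toReal := by
    rw [div_le_iff₀ hs2, hE]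
    nlinarith
  calc ENNReal.ofReal ((v - s1 - 4 * σ2 * (1 + s2 / (2 * σ2)) * e2) / s2)
      ≤ ENNReal.ofReal ((μ A).toReal) := ENNReal.ofReal_le_ofReal hdiv
    _ = μ A := ENNReal.ofReal_toReal (measure_ne_top μ A)
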